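/- Let 0 < β < 1/2. Then for nonnegative measurable g on (0,∞): ∫_0^∞ ∫_0^∞ g(s) g(s₁) (s+s₁)^{-(1-2β)} s^{-β} s₁^{-β} ds ds₁ ≲ ∫_0^∞ g(s)² ds. -/

import Mathlib

open MeasureTheory Real Set
open scoped ENNReal

noncomputable section

/-- The fractional heat kernel `K_t^α = 𝓕⁻¹(e^{-t|ξ|^{2α}})` on `ℝⁿ`. -/
def fracHeatKernel (n : ℕ) (α t : ℝ) : EuclideanSpace ℝ (Fin n) → ℂ :=
  VectorFourier.fourierIntegral Real.fourierChar volume (-innerₗ (EuclideanSpace ℝ (Fin n))) fun ξ : EuclideanSpace ℝ (Fin n) =>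
    (Real.exp (-t * ‖ξ‖ ^ (2 * α)) : ℂ)

/-- The fractional heat semigroup `e^{-t(-Δ)^α} f = K_t^α * f` (convolution form). -/
def fracHeat (n : ℕ) (α t : ℝ) (f : EuclideanSpace ℝ (Fin n) → ℂ)
    (x : EuclideanSpace ℝ (Fin n)) : ℂ :=
  ∫ y, fracHeatKernel n α t (x - y) * f y

/-- The fractional heat semigroup `e^{-t(-Δ)^α} f = 𝓕⁻¹(e^{-t|ξ|^{2α}} 𝓕 f)` (Fourier form). -/
def fracHeatF (n : ℕ) (α t : ℝ) (f : EuclideanSpace ℝ (Fin n) → ℂ) :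
    EuclideanSpace ℝ (Fin n) → ℂ :=
  VectorFourier.fourierIntegral Real.fourierChar volume (-innerₗ (EuclideanSpace ℝ (Fin n))) fun ξ : EuclideanSpace ℝ (Fin n) =>
    Real.exp (-t * ‖ξ‖ ^ (2 * α)) • VectorFourier.fourierIntegral Real.fourierChar volume (innerₗ (EuclideanSpace ℝ (Fin n))) f ξ

/-- The fractional Laplacian `(-Δ)^β f = 𝓕⁻¹(|ξ|^{2β} 𝓕 f)`. -/
def fracLap (n : ℕ) (β : ℝ) (f : EuclideanSpace ℝ (Fin n) → ℂ) :
    EuclideanSpace ℝ (Fin n) → ℂ :=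
  VectorFourier.fourierIntegral Real.fourierChar volume (-innerₗ (EuclideanSpace ℝ (Fin n))) fun ξ : EuclideanSpace ℝ (Fin n) =>
    (‖ξ‖ ^ (2 * β)) • VectorFourier.fourierIntegral Real.fourierChar volume (innerₗ (EuclideanSpace ℝ (Fin n))) f ξ

/-- The Duhamel term `∫_0^t e^{-(t-s)(-Δ)^α} F(s,·) ds`. -/
def duhamel (n : ℕ) (α : ℝ) (F : ℝ → EuclideanSpace ℝ (Fin n) → ℂ)
    (t : ℝ) (x : EuclideanSpace ℝ (Fin n)) : ℂ :=
  ∫ s in Ioc (0 : ℝ) t, fracHeat n α (t - s) (F s) x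

/-- The mixed space-time norm `‖u‖_{L^q_t(I; L^p_x)}`. -/
def mixedNorm {E : Type*} [NormedAddCommGroup E] {n : ℕ} (I : Set ℝ) (q p : ℝ≥0∞)
    (u : ℝ → EuclideanSpace ℝ (Fin n) → E) : ℝ≥0∞ :=
  eLpNorm (fun t => (eLpNorm (u t) p volume).toReal) q (volume.restrict I)

lemma piece1 (β : ℝ) (hβ0 : 0 < β) (hβ : β < 1/2) {s : ℝ} (hs : 0 < s) :
    ∫⁻ x in Ioc (0:ℝ) s, ENNReal.ofReal ((s+x) ^ (2*β-1) * s ^ (1/2-β) * x ^ (-(β+1/2)))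
      ≤ ENNReal.ofReal (1/(1/2-β)) := by
  have hc : (0:ℝ) < 1/2 - β := by linarith
  have hr : (-1:ℝ) < -(β+1/2) := by linarith
  calc ∫⁻ x in Ioc (0:ℝ) s, ENNReal.ofReal ((s+x) ^ (2*β-1) * s ^ (1/2-β) * x ^ (-(β+1/2)))
      ≤ ∫⁻ x in Ioc (0:ℝ) s, ENNReal.ofReal (s ^ (β-1/2) * x ^ (-(β+1/2))) := by
        refine setLIntegral_mono' measurableSet_Ioc fun x hx => ?_
        refine ENNReal.ofReal_le_ofReal ?_
        have h1 : (s+x) ^ (2*β-1) ≤ s ^ (2*β-1) :=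
          rpow_le_rpow_of_nonpos hs (by linarith [hx.1]) (by linarith)
        have h2 : s ^ (2*β-1) * s ^ (1/2-β) = s ^ (β-1/2) := by
          rw [← rpow_add hs]; ring_nf
        calc (s+x) ^ (2*β-1) * s ^ (1/2-β) * x ^ (-(β+1/2))
            ≤ s ^ (2*β-1) * s ^ (1/2-β) * x ^ (-(β+1/2)) := by
              exact mul_le_mul_of_nonneg_right
                (mul_le_mul_of_nonneg_right h1 (rpow_nonneg hs.le _))
                (rpow_nonneg hx.1.le _)
          _ = s ^ (β-1/2) * x ^ (-(β+1/2)) := by rw [h2]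
    _ = ENNReal.ofReal (∫ x in Ioc (0:ℝ) s, s ^ (β-1/2) * x ^ (-(β+1/2))) := by
        rw [ofReal_integral_eq_lintegral_ofReal]
        · exact (((intervalIntegrable_iff_integrableOn_Ioc_of_le hs.le).mp
            (intervalIntegral.intervalIntegrable_rpow' hr)).const_mul _)
        · filter_upwards [ae_restrict_mem measurableSet_Ioc] with x hx
          exact mul_nonneg (rpow_nonneg hs.le _) (rpow_nonneg hx.1.le _)
    _ = ENNReal.ofReal (1/(1/2-β)) := by
        congr 1
        rw [MeasureTheory.integral_const_mul, ← intervalIntegral.integral_of_le hs.le,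
          integral_rpow (Or.inl hr)]
        rw [Real.zero_rpow (by linarith : -(β+1/2)+1 ≠ 0)]
        rw [show -(β+1/2)+1 = 1/2-β by ring, sub_zero, ← mul_div_assoc, ← rpow_add hs]
        rw [show β-1/2+(1/2-β) = 0 by ring, rpow_zero]

lemma piece2 (β : ℝ) (hβ0 : 0 < β) (hβ : β < 1/2) {s : ℝ} (hs : 0 < s) :
    ∫⁻ x in Ioi s, ENNReal.ofReal ((s+x) ^ (2*β-1) * s ^ (1/2-β) * x ^ (-(β+1/2)))
      ≤ ENNReal.ofReal (1/(1/2-β)) := by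
  have hc : (0:ℝ) < 1/2 - β := by linarith
  have hr : β - 3/2 < (-1:ℝ) := by linarith
  calc ∫⁻ x in Ioi s, ENNReal.ofReal ((s+x) ^ (2*β-1) * s ^ (1/2-β) * x ^ (-(β+1/2)))
      ≤ ∫⁻ x in Ioi s, ENNReal.ofReal (s ^ (1/2-β) * x ^ (β-3/2)) := by
        refine setLIntegral_mono' measurableSet_Ioi fun x hx => ?_
        refine ENNReal.ofReal_le_ofReal ?_
        have hx0 : 0 < x := hs.trans hx
        have h1 : (s+x) ^ (2*β-1) ≤ x ^ (2*β-1) :=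
          rpow_le_rpow_of_nonpos hx0 (by linarith) (by linarith)
        have h2 : x ^ (2*β-1) * x ^ (-(β+1/2)) = x ^ (β-3/2) := by
          rw [← rpow_add hx0]; ring_nf
        calc (s+x) ^ (2*β-1) * s ^ (1/2-β) * x ^ (-(β+1/2))
            ≤ x ^ (2*β-1) * s ^ (1/2-β) * x ^ (-(β+1/2)) := by
              exact mul_le_mul_of_nonneg_right
                (mul_le_mul_of_nonneg_right h1 (rpow_nonneg hs.le _))
                (rpow_nonneg hx0.le _)
          _ = s ^ (1/2-β) * x ^ (β-3/2) := by rw [← h2]; ring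
    _ = ENNReal.ofReal (∫ x in Ioi s, s ^ (1/2-β) * x ^ (β-3/2)) := by
        rw [ofReal_integral_eq_lintegral_ofReal]
        · exact (integrableOn_Ioi_rpow_of_lt hr hs).const_mul _
        · filter_upwards [ae_restrict_mem measurableSet_Ioi] with x hx
          exact mul_nonneg (rpow_nonneg hs.le _) (rpow_nonneg (hs.trans hx).le _)
    _ = ENNReal.ofReal (1/(1/2-β)) := by
        congr 1
        rw [MeasureTheory.integral_const_mul, integral_Ioi_rpow_of_lt hr hs]
        rw [show β-3/2+1 = -(1/2-β) by ring]
        rw [neg_div, mul_neg, ← mul_div_assoc, ← rpow_add hs]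
        rw [show (1/2-β)+-(1/2-β) = 0 by ring, rpow_zero]
        field_simp

lemma key_inner (β : ℝ) (hβ0 : 0 < β) (hβ : β < 1/2) {s : ℝ} (hs : 0 < s) :
    ∫⁻ x in Ioi (0:ℝ), ENNReal.ofReal ((s+x) ^ (2*β-1) * s ^ (1/2-β) * x ^ (-(β+1/2)))
      ≤ ENNReal.ofReal (2/(1/2-β)) := by
  have hc : (0:ℝ) < 1/2 - β := by linarith
  have hsplit : (Ioi (0:ℝ)) = Ioc 0 s ∪ Ioi s := (Ioc_union_Ioi_eq_Ioi hs.le).symm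
  rw [hsplit, lintegral_union measurableSet_Ioi Ioc_disjoint_Ioi_same]
  calc _ ≤ ENNReal.ofReal (1/(1/2-β)) + ENNReal.ofReal (1/(1/2-β)) :=
        add_le_add (piece1 β hβ0 hβ hs) (piece2 β hβ0 hβ hs)
    _ = ENNReal.ofReal (2/(1/2-β)) := by
        rw [← ENNReal.ofReal_add (by positivity) (by positivity)]; congr 1; ring


lemma pointwise_amgm (β : ℝ) {s s₁ x y : ℝ} (hs : 0 < s) (hs₁ : 0 < s₁)
    (hx : 0 ≤ x) (hy : 0 ≤ y) :
    x * y * (s + s₁) ^ (-(1 - 2 * β)) * s ^ (-β) * s₁ ^ (-β) ≤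
      1/2 * x^2 * ((s+s₁) ^ (2*β-1) * s ^ (1/2-β) * s₁ ^ (-(β+1/2)))
      + 1/2 * y^2 * ((s₁+s) ^ (2*β-1) * s₁ ^ (1/2-β) * s ^ (-(β+1/2))) := by
  have hss : (0:ℝ) < s + s₁ := by linarith
  set K : ℝ := (s+s₁) ^ (2*β-1) * s ^ (-β) * s₁ ^ (-β) with hKdef
  set w : ℝ := s ^ (1/2 : ℝ) * s₁ ^ (-(1/2) : ℝ) with hwdef
  have hK : 0 ≤ K := by positivity
  have hw : 0 < w := by positivity
  have e1 : (s+s₁) ^ (2*β-1) * s ^ (1/2-β) * s₁ ^ (-(β+1/2)) = K * w := by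
    rw [hKdef, hwdef, show (1/2-β) = (-β)+(1/2:ℝ) by ring, rpow_add hs,
      show -(β+1/2) = (-β)+(-(1/2):ℝ) by ring, rpow_add hs₁]
    ring
  have e2 : ((s₁+s) ^ (2*β-1) * s₁ ^ (1/2-β) * s ^ (-(β+1/2))) * w = K := by
    have hA : s ^ (-(1/2):ℝ) * s ^ ((1/2):ℝ) = 1 := by
      rw [← rpow_add hs]; norm_num
    have hB : s₁ ^ ((1/2):ℝ) * s₁ ^ (-(1/2):ℝ) = 1 := by
      rw [← rpow_add hs₁]; norm_num
    rw [hKdef, hwdef, show (1/2-β) = (-β)+(1/2:ℝ) by ring, rpow_add hs₁,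
      show -(β+1/2) = (-β)+(-(1/2):ℝ) by ring, rpow_add hs,
      show s₁ + s = s + s₁ by ring]
    linear_combination ((s+s₁) ^ (2*β-1) * s ^ (-β) * s₁ ^ (-β) *
        (s ^ (-(1/2):ℝ) * s ^ ((1/2):ℝ))) * hB +
      ((s+s₁) ^ (2*β-1) * s ^ (-β) * s₁ ^ (-β)) * hA
  have eL : x * y * (s + s₁) ^ (-(1 - 2 * β)) * s ^ (-β) * s₁ ^ (-β) = x * y * K := by
    rw [hKdef, show -(1-2*β) = 2*β-1 by ring]; ring
  rw [eL, e1]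
  set F2 : ℝ := (s₁+s) ^ (2*β-1) * s₁ ^ (1/2-β) * s ^ (-(β+1/2)) with hF2
  have key : 2 * (x * y * K) * w ≤ (x^2 * (K*w) + y^2 * F2) * w := by
    nlinarith [mul_nonneg hK (sq_nonneg (x*w - y)), e2]
  have key' : 2 * (x * y * K) ≤ x^2 * (K*w) + y^2 * F2 :=
    le_of_mul_le_mul_right (by linarith) hw
  linarith


set_option maxHeartbeats 1000000 in
/-- Bilinear weighted estimate used in the TT* argument. -/
theorem stmt11 (β : ℝ) (hβ0 : 0 < β) (hβ : β < 1 / 2) :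
    ∃ C > 0, ∀ g : ℝ → ℝ, Measurable g → (∀ s, 0 ≤ g s) →
      (∫⁻ s in Ioi (0 : ℝ), ∫⁻ s₁ in Ioi (0 : ℝ),
          ENNReal.ofReal
            (g s * g s₁ * (s + s₁) ^ (-(1 - 2 * β)) * s ^ (-β) * s₁ ^ (-β))) ≤
        ENNReal.ofReal C * ∫⁻ s in Ioi (0 : ℝ), ENNReal.ofReal (g s ^ 2) := by
  have hc : (0:ℝ) < 1/2 - β := by linarith
  refine ⟨2/(1/2-β), by positivity, fun g hg hg0 => ?_⟩
  set μ := volume.restrict (Ioi (0:ℝ)) with hμ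
  set A : ℝ → ℝ → ℝ≥0∞ := fun s s₁ =>
    ENNReal.ofReal (1/2 * (g s)^2 * ((s+s₁) ^ (2*β-1) * s ^ (1/2-β) * s₁ ^ (-(β+1/2))))
    with hA
  have hmeasA : Measurable (Function.uncurry A) := by
    rw [hA]; fun_prop
  have hmeasA2 : Measurable (Function.uncurry fun s s₁ => A s₁ s) :=
    hmeasA.comp measurable_swap
  -- Step 1: pointwise bound
  have step1 : (∫⁻ s in Ioi (0 : ℝ), ∫⁻ s₁ in Ioi (0 : ℝ),
      ENNReal.ofReal (g s * g s₁ * (s + s₁) ^ (-(1 - 2 * β)) * s ^ (-β) * s₁ ^ (-β))) ≤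
      ∫⁻ s in Ioi (0 : ℝ), ∫⁻ s₁ in Ioi (0 : ℝ), (A s s₁ + A s₁ s) := by
    refine setLIntegral_mono' measurableSet_Ioi fun s hs => ?_
    refine setLIntegral_mono' measurableSet_Ioi fun s₁ hs₁ => ?_
    refine le_trans (ENNReal.ofReal_le_ofReal
      (pointwise_amgm β hs hs₁ (hg0 s) (hg0 s₁))) ?_
    exact ENNReal.ofReal_add_le
  -- Step 2: split the sum
  have step2 : (∫⁻ s in Ioi (0 : ℝ), ∫⁻ s₁ in Ioi (0 : ℝ), (A s s₁ + A s₁ s)) =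
      (∫⁻ s in Ioi (0 : ℝ), ∫⁻ s₁ in Ioi (0 : ℝ), A s s₁)
      + ∫⁻ s in Ioi (0 : ℝ), ∫⁻ s₁ in Ioi (0 : ℝ), A s₁ s := by
    have h1 : ∀ s : ℝ, (∫⁻ s₁ in Ioi (0 : ℝ), (A s s₁ + A s₁ s)) =
        (∫⁻ s₁ in Ioi (0 : ℝ), A s s₁) + ∫⁻ s₁ in Ioi (0 : ℝ), A s₁ s := fun s =>
      lintegral_add_left (by exact hmeasA.comp (measurable_prodMk_left (x := s))) _
    simp_rw [h1]
    exact lintegral_add_left (Measurable.lintegral_prod_right' (f := fun p : ℝ × ℝ => A p.1 p.2) hmeasA) _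
  -- Step 3: swap
  have step3 : (∫⁻ s in Ioi (0 : ℝ), ∫⁻ s₁ in Ioi (0 : ℝ), A s₁ s) =
      ∫⁻ s in Ioi (0 : ℝ), ∫⁻ s₁ in Ioi (0 : ℝ), A s s₁ := by
    exact lintegral_lintegral_swap hmeasA2.aemeasurable
  -- Step 4: bound the A-term
  have step4 : (∫⁻ s in Ioi (0 : ℝ), ∫⁻ s₁ in Ioi (0 : ℝ), A s s₁) ≤
      ENNReal.ofReal (1/(1/2-β)) * ∫⁻ s in Ioi (0 : ℝ), ENNReal.ofReal (g s ^ 2) := by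
    have hb : ∀ s ∈ Ioi (0:ℝ), (∫⁻ s₁ in Ioi (0 : ℝ), A s s₁) ≤
        ENNReal.ofReal (1/(1/2-β)) * ENNReal.ofReal (g s ^ 2) := by
      intro s hs
      have e : ∀ s₁ : ℝ, A s s₁ = ENNReal.ofReal (1/2 * (g s)^2) *
          ENNReal.ofReal ((s+s₁) ^ (2*β-1) * s ^ (1/2-β) * s₁ ^ (-(β+1/2))) := fun s₁ => by
        rw [hA, ← ENNReal.ofReal_mul (by positivity)]
      simp_rw [e]
      rw [lintegral_const_mul _ (by fun_prop)]
      calc ENNReal.ofReal (1/2 * (g s)^2) *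
            ∫⁻ s₁ in Ioi (0:ℝ), ENNReal.ofReal ((s+s₁) ^ (2*β-1) * s ^ (1/2-β) * s₁ ^ (-(β+1/2)))
          ≤ ENNReal.ofReal (1/2 * (g s)^2) * ENNReal.ofReal (2/(1/2-β)) :=
            mul_le_mul_right (key_inner β hβ0 hβ hs) _
        _ = ENNReal.ofReal (1/(1/2-β)) * ENNReal.ofReal (g s ^ 2) := by
            rw [← ENNReal.ofReal_mul (by positivity), ← ENNReal.ofReal_mul (by positivity)]
            congr 1
            have hne : (1:ℝ)/2-β ≠ 0 := ne_of_gt hc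
            field_simp
    calc (∫⁻ s in Ioi (0 : ℝ), ∫⁻ s₁ in Ioi (0 : ℝ), A s s₁)
        ≤ ∫⁻ s in Ioi (0 : ℝ), ENNReal.ofReal (1/(1/2-β)) * ENNReal.ofReal (g s ^ 2) :=
          setLIntegral_mono' measurableSet_Ioi hb
      _ = ENNReal.ofReal (1/(1/2-β)) * ∫⁻ s in Ioi (0 : ℝ), ENNReal.ofReal (g s ^ 2) :=
          lintegral_const_mul _ (by fun_prop)
  calc (∫⁻ s in Ioi (0 : ℝ), ∫⁻ s₁ in Ioi (0 : ℝ),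
        ENNReal.ofReal (g s * g s₁ * (s + s₁) ^ (-(1 - 2 * β)) * s ^ (-β) * s₁ ^ (-β)))
      ≤ (∫⁻ s in Ioi (0 : ℝ), ∫⁻ s₁ in Ioi (0 : ℝ), A s s₁)
        + ∫⁻ s in Ioi (0 : ℝ), ∫⁻ s₁ in Ioi (0 : ℝ), A s₁ s := step1.trans_eq step2
    _ = 2 * ∫⁻ s in Ioi (0 : ℝ), ∫⁻ s₁ in Ioi (0 : ℝ), A s s₁ := by rw [step3, ← two_mul]
    _ ≤ 2 * (ENNReal.ofReal (1/(1/2-β)) * ∫⁻ s in Ioi (0 : ℝ), ENNReal.ofReal (g s ^ 2)) :=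
        mul_le_mul_right step4 _
    _ = ENNReal.ofReal (2/(1/2-β)) * ∫⁻ s in Ioi (0 : ℝ), ENNReal.ofReal (g s ^ 2) := by
        rw [← mul_assoc]
        congr 1
        rw [show (2:ℝ≥0∞) = ENNReal.ofReal 2 by simp, ← ENNReal.ofReal_mul (by norm_num)]
        congr 1; ring
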